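/- For all n ≥ 2, g₄(n) = 3, where g₄(n) is the smallest integer g such that every subset A of {1, ..., 2n} with |A| ≥ n + g contains all six pairwise sums of some four distinct integers. -/
import Mathlib

set_option maxHeartbeats 1000000 in
theorem stmt_6 (n : ℕ) (hn : 2 ≤ n) :
    (∀ A : Finset ℤ, A ⊆ Finset.Icc 1 (2 * (n : ℤ)) → n + 3 ≤ A.card →
      ∃ b : Fin 4 → ℤ, Function.Injective b ∧
        ∀ i j : Fin 4, i < j → b i + b j ∈ A) ∧
    (∃ A : Finset ℤ, A ⊆ Finset.Icc 1 (2 * (n : ℤ)) ∧ n + 2 ≤ A.card ∧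
      ¬ ∃ b : Fin 4 → ℤ, Function.Injective b ∧
        ∀ i j : Fin 4, i < j → b i + b j ∈ A) := by
  constructor
  · -- Upper bound: |A| ≥ n+3 forces a configuration
    intro A hA hcard
    set S : Finset ℤ := Finset.filter (fun i => i ∈ A ∧ 2*(n:ℤ)+1-i ∈ A) (Finset.Icc (1:ℤ) n) with hS
    have hScard : 2 < S.card := by
      have hmaps : ∀ i ∈ Finset.Icc (1:ℤ) n \ S,
          (if i ∈ A then 2*(n:ℤ)+1-i else i) ∈ Finset.Icc (1:ℤ) (2*n) \ A := by
        intro i hi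
        rw [Finset.mem_sdiff] at hi
        obtain ⟨hi1, hi2⟩ := hi
        rw [Finset.mem_Icc] at hi1
        rw [Finset.mem_sdiff, Finset.mem_Icc]
        by_cases hiA : i ∈ A
        · have hnot : ¬ (2*(n:ℤ)+1-i ∈ A) := by
            intro hc
            exact hi2 (Finset.mem_filter.mpr ⟨Finset.mem_Icc.mpr hi1, hiA, hc⟩)
          simp only [hiA, if_true]
          exact ⟨⟨by omega, by omega⟩, hnot⟩
        · simp only [hiA, if_false]
          exact ⟨⟨hi1.1, by omega⟩, not_false⟩
      have hinj : Set.InjOn (fun i => if i ∈ A then 2*(n:ℤ)+1-i else i)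
          ↑(Finset.Icc (1:ℤ) n \ S) := by
        intro i hi j hj hij
        simp only [Finset.coe_sdiff, Set.mem_diff, Finset.mem_coe, Finset.mem_Icc] at hi hj
        by_cases hiA : i ∈ A <;> by_cases hjA : j ∈ A <;>
          simp only [hiA, hjA, if_true, if_false] at hij <;> omega
      have h1 := Finset.card_le_card_of_injOn _ hmaps hinj
      have h2 : (Finset.Icc (1:ℤ) n \ S).card = (Finset.Icc (1:ℤ) n).card - S.card :=
        Finset.card_sdiff_of_subset (Finset.filter_subset _ _)
      have h3 : (Finset.Icc (1:ℤ) (2*n) \ A).card = (Finset.Icc (1:ℤ) (2*n)).card - A.card :=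
        Finset.card_sdiff_of_subset hA
      have h4 : (Finset.Icc (1:ℤ) n).card = n := by rw [Int.card_Icc]; omega
      have h5 : (Finset.Icc (1:ℤ) (2*n)).card = 2*n := by rw [Int.card_Icc]; omega
      have h6 : S.card ≤ (Finset.Icc (1:ℤ) n).card :=
        Finset.card_le_card (Finset.filter_subset _ _)
      have h7 : A.card ≤ (Finset.Icc (1:ℤ) (2*n)).card := Finset.card_le_card hA
      omega
    obtain ⟨x1, x2, x3, hx1, hx2, hx3, h12, h13, h23⟩ := Finset.two_lt_card_iff.mp hScard
    simp only [hS, Finset.mem_filter, Finset.mem_Icc] at hx1 hx2 hx3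
    obtain ⟨⟨hx1l, hx1u⟩, hx1A, hy1A⟩ := hx1
    obtain ⟨⟨hx2l, hx2u⟩, hx2A, hy2A⟩ := hx2
    obtain ⟨⟨hx3l, hx3u⟩, hx3A, hy3A⟩ := hx3
    have key : ∀ s : ℤ, (s = x1 ∨ s = x2 ∨ s = x3 ∨ s = 2*(n:ℤ)+1-x1 ∨
        s = 2*(n:ℤ)+1-x2 ∨ s = 2*(n:ℤ)+1-x3) → s ∈ A := by
      rintro s (rfl|rfl|rfl|rfl|rfl|rfl) <;> assumption
    rcases Int.even_or_odd (x1 + x2 - x3) with ⟨m, hm⟩ | ⟨m, hm⟩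
    · refine ⟨![m, x1 - m, x2 - m, 2*(n:ℤ)+1-x3-m], ?_, ?_⟩
      · intro i j h
        fin_cases i <;> fin_cases j <;>
          first
            | rfl
            | (exfalso; simp only [Matrix.cons_val_zero, Matrix.cons_val_one, Matrix.head_cons,
                Matrix.cons_val_two, Matrix.tail_cons, Matrix.cons_val_three,
                Fin.mk_zero, Fin.mk_one] at h; omega)
            | (exfalso; simp at h; omega)
      · intro i j hij
        fin_cases i <;> fin_cases j <;>
          first
            | exact absurd hij (by decide)
            | (apply key; simp; done)
            | (apply key; simp; omega)
    · refine ⟨![m + x3 - n, x1 - (m + x3 - n), x2 - (m + x3 - n), (n:ℤ) - m], ?_, ?_⟩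
      · intro i j h
        fin_cases i <;> fin_cases j <;>
          first
            | rfl
            | (exfalso; simp only [Matrix.cons_val_zero, Matrix.cons_val_one, Matrix.head_cons,
                Matrix.cons_val_two, Matrix.tail_cons, Matrix.cons_val_three,
                Fin.mk_zero, Fin.mk_one] at h; omega)
            | (exfalso; simp at h; omega)
      · intro i j hij
        fin_cases i <;> fin_cases j <;>
          first
            | exact absurd hij (by decide)
            | (apply key; simp; done)
            | (apply key; simp; omega)
  · -- Lower bound construction: odds ∪ {2n-2, 2n}
    refine ⟨(Finset.range n).image (fun k : ℕ => 2*(k:ℤ)+1) ∪ {2*(n:ℤ)-2, 2*(n:ℤ)}, ?_, ?_, ?_⟩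
    · intro x hx
      simp only [Finset.mem_union, Finset.mem_image, Finset.mem_range, Finset.mem_insert,
        Finset.mem_singleton] at hx
      rw [Finset.mem_Icc]
      rcases hx with ⟨k, hk, rfl⟩ | rfl | rfl <;> omega
    · have hdisj : Disjoint ((Finset.range n).image (fun k : ℕ => 2*(k:ℤ)+1))
          ({2*(n:ℤ)-2, 2*(n:ℤ)} : Finset ℤ) := by
        rw [Finset.disjoint_left]
        intro a ha hb
        simp only [Finset.mem_image, Finset.mem_range] at ha
        simp only [Finset.mem_insert, Finset.mem_singleton] at hb
        obtain ⟨k, hk, rfl⟩ := ha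
        omega
      rw [Finset.card_union_of_disjoint hdisj,
        Finset.card_image_of_injective _ (fun a b h => by omega),
        Finset.card_range]
      have h2 : ({2*(n:ℤ)-2, 2*(n:ℤ)} : Finset ℤ).card = 2 := by
        rw [Finset.card_insert_of_notMem (by simp), Finset.card_singleton]
      omega
    · rintro ⟨b, hinj, hsum⟩
      have key : ∀ s : ℤ, s ∈ (Finset.range n).image (fun k : ℕ => 2*(k:ℤ)+1) ∪
          {2*(n:ℤ)-2, 2*(n:ℤ)} →
          (s % 2 = 1 ∧ 1 ≤ s ∧ s ≤ 2*(n:ℤ)-1) ∨ s = 2*(n:ℤ)-2 ∨ s = 2*(n:ℤ) := by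
        intro s hs
        simp only [Finset.mem_union, Finset.mem_image, Finset.mem_range, Finset.mem_insert,
          Finset.mem_singleton] at hs
        rcases hs with ⟨k, hk, rfl⟩ | rfl | rfl <;> omega
      have d01 : b 0 ≠ b 1 := fun h => absurd (hinj h) (by decide)
      have d02 : b 0 ≠ b 2 := fun h => absurd (hinj h) (by decide)
      have d03 : b 0 ≠ b 3 := fun h => absurd (hinj h) (by decide)
      have d12 : b 1 ≠ b 2 := fun h => absurd (hinj h) (by decide)
      have d13 : b 1 ≠ b 3 := fun h => absurd (hinj h) (by decide)
      have d23 : b 2 ≠ b 3 := fun h => absurd (hinj h) (by decide)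
      have t01 := key _ (hsum 0 1 (by decide))
      have t02 := key _ (hsum 0 2 (by decide))
      have t03 := key _ (hsum 0 3 (by decide))
      have t12 := key _ (hsum 1 2 (by decide))
      have t13 := key _ (hsum 1 3 (by decide))
      have t23 := key _ (hsum 2 3 (by decide))
      omega
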